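/- Let S be a set of scaled generators for a max cone K in ℝ≥0^n and let E be the set of scaled extremals in K. Then: (1) E ⊆ S; and (2) for any u ∈ S \ E, the set S \ {u} is a set of generators for K. -/

import Mathlib

open scoped NNReal

/-- The max-algebraic span of `S`: all vectors `⨆_{x ∈ S} λ_x • x` where only
finitely many coefficients `λ_x` are nonzero (`MaxSpan ∅ = {0}`). -/
def MaxSpan {n : ℕ} (S : Set (Fin n → ℝ≥0)) : Set (Fin n → ℝ≥0) :=
  {u | ∃ (F : Finset (Fin n → ℝ≥0)) (lam : (Fin n → ℝ≥0) → ℝ≥0),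
    ↑F ⊆ S ∧ u = F.sup (fun x => lam x • x)}

/-- A max cone: a subset of `ℝ≥0ⁿ` closed under pointwise max `⊔` and under
multiplication by nonnegative scalars. -/
def MaxCone {n : ℕ} (K : Set (Fin n → ℝ≥0)) : Prop :=
  0 ∈ K ∧ (∀ x ∈ K, ∀ y ∈ K, x ⊔ y ∈ K) ∧ (∀ (c : ℝ≥0), ∀ x ∈ K, c • x ∈ K)

/-- `u` is an extremal in `K` if `u = v ⊔ w` with `v, w ∈ K` implies `u = v` or `u = w`. -/
def IsExtremal {n : ℕ} (K : Set (Fin n → ℝ≥0)) (u : Fin n → ℝ≥0) : Prop :=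
  u ∈ K ∧ ∀ v ∈ K, ∀ w ∈ K, u = v ⊔ w → u = v ∨ u = w

/-- A vector is scaled if its max norm `⨆ i, x i` equals `1`. -/
def Scaled {n : ℕ} (x : Fin n → ℝ≥0) : Prop := (⨆ i, x i) = 1

/-- The support of a vector. -/
def supp {n : ℕ} (v : Fin n → ℝ≥0) : Set (Fin n) := {j | 0 < v j}

/-- For `j ∈ supp u`, `rescale u j = (1 / u j) • u`, the `j`-scaling `u(j)`. -/
noncomputable def rescale {n : ℕ} (u : Fin n → ℝ≥0) (j : Fin n) : Fin n → ℝ≥0 :=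
  (u j)⁻¹ • u

/-- `T(j) = {u(j) : u ∈ T, j ∈ supp u}`. -/
noncomputable def setScale {n : ℕ} (T : Set (Fin n → ℝ≥0)) (j : Fin n) :
    Set (Fin n → ℝ≥0) :=
  {y | ∃ u ∈ T, j ∈ supp u ∧ y = rescale u j}

/-- `u` is minimal in `T` if `v ∈ T` and `v ≤ u` imply `v = u`. -/
def MinimalIn {n : ℕ} (T : Set (Fin n → ℝ≥0)) (u : Fin n → ℝ≥0) : Prop :=
  u ∈ T ∧ ∀ v ∈ T, v ≤ u → v = u

/-- A set is totally dependent if each of its elements is a max combination of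
the remaining ones. -/
def TotallyDependent {n : ℕ} (S : Set (Fin n → ℝ≥0)) : Prop :=
  ∀ x ∈ S, x ∈ MaxSpan (S \ {x})

/-- A set is independent if none of its elements is a max combination of
the remaining ones. -/
def IndependentSet {n : ℕ} (S : Set (Fin n → ℝ≥0)) : Prop :=
  ∀ x ∈ S, x ∉ MaxSpan (S \ {x})

/-- A basis for `K` is an independent set of generators for `K`. -/
def IsBasis {n : ℕ} (S K : Set (Fin n → ℝ≥0)) : Prop :=
  IndependentSet S ∧ MaxSpan S = K

set_option maxHeartbeats 1000000
set_option synthInstance.maxHeartbeats 1000000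

section AuxStmt7
variable {n : ℕ}

private lemma pi_bot_eq_zero : (⊥ : Fin n → ℝ≥0) = 0 := by ext j; simp

private lemma pi_smul_sup (c : ℝ≥0) (a b : Fin n → ℝ≥0) :
    c • (a ⊔ b) = c • a ⊔ c • b := by
  funext j
  simp only [Pi.smul_apply, Pi.sup_apply, smul_eq_mul]
  exact mul_max c (a j) (b j)

private lemma maxSpan_mem_self {S : Set (Fin n → ℝ≥0)} {x : Fin n → ℝ≥0} (hx : x ∈ S) :
    x ∈ MaxSpan S := by
  refine ⟨{x}, fun _ => 1, by simpa using hx, ?_⟩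
  simp

private lemma maxSpan_mono {S T : Set (Fin n → ℝ≥0)} (h : S ⊆ T) :
    MaxSpan S ⊆ MaxSpan T := by
  rintro u ⟨F, lam, hF, rfl⟩
  exact ⟨F, lam, hF.trans h, rfl⟩

private lemma finsetSup_mem_cone {K : Set (Fin n → ℝ≥0)} (hK : MaxCone K)
    (F : Finset (Fin n → ℝ≥0)) (f : (Fin n → ℝ≥0) → Fin n → ℝ≥0)
    (hf : ∀ x ∈ F, f x ∈ K) : F.sup f ∈ K := by
  induction F using Finset.induction_on with
  | empty => rw [Finset.sup_empty, pi_bot_eq_zero]; exact hK.1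
  | @insert a F ha ih =>
      rw [Finset.sup_insert]
      exact hK.2.1 _ (hf a (Finset.mem_insert_self a F)) _
        (ih fun x hx => hf x (Finset.mem_insert_of_mem hx))

private lemma maxSpan_subset_cone {K S : Set (Fin n → ℝ≥0)} (hK : MaxCone K)
    (hS : S ⊆ K) : MaxSpan S ⊆ K := by
  rintro u ⟨F, lam, hF, rfl⟩
  exact finsetSup_mem_cone hK F _ fun x hx => hK.2.2 (lam x) x (hS (hF hx))

private lemma maxSpan_maxCone (S : Set (Fin n → ℝ≥0)) : MaxCone (MaxSpan S) := by
  classical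
  refine ⟨⟨∅, fun _ => 0, by simp, by simp [pi_bot_eq_zero]⟩, ?_, ?_⟩
  · rintro x ⟨F, lam, hF, rfl⟩ y ⟨G, mu, hG, rfl⟩
    refine ⟨F ∪ G,
      fun z => (if z ∈ F then lam z else 0) ⊔ (if z ∈ G then mu z else 0), ?_, ?_⟩
    · intro z hz
      rcases Finset.mem_union.mp (by exact_mod_cast hz) with h | h
      · exact hF h
      · exact hG h
    · apply le_antisymm
      · apply sup_le
        · apply Finset.sup_le
          intro z hz
          refine le_trans ?_ (Finset.le_sup (Finset.mem_union_left _ hz))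
          intro j
          simp only [Pi.smul_apply, smul_eq_mul, if_pos hz]
          exact mul_le_mul_left le_sup_left (z j)
        · apply Finset.sup_le
          intro z hz
          refine le_trans ?_ (Finset.le_sup (Finset.mem_union_right _ hz))
          intro j
          simp only [Pi.smul_apply, smul_eq_mul, if_pos hz]
          exact mul_le_mul_left le_sup_right (z j)
      · apply Finset.sup_le
        intro z _ j
        simp only [Pi.smul_apply, smul_eq_mul, Pi.sup_apply]
        rw [max_mul]
        apply max_le
        · by_cases hzF : z ∈ F
          · simp only [if_pos hzF]
            exact le_trans ((Finset.le_sup (f := fun x => lam x • x) hzF) j)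
              (le_sup_left (b := G.sup (fun x => mu x • x) j))
          · simp [if_neg hzF]
        · by_cases hzG : z ∈ G
          · simp only [if_pos hzG]
            exact le_trans ((Finset.le_sup (f := fun x => mu x • x) hzG) j)
              (le_sup_right (a := F.sup (fun x => lam x • x) j))
          · simp [if_neg hzG]
  · rintro c x ⟨F, lam, hF, rfl⟩
    refine ⟨F, fun z => c * lam z, hF, ?_⟩
    clear hF
    induction F using Finset.induction_on with
    | empty => simp [pi_bot_eq_zero]
    | @insert a F ha ih =>
        rw [Finset.sup_insert, Finset.sup_insert, pi_smul_sup, ih, mul_smul]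

private lemma maxSpan_le_maxSpan {S T : Set (Fin n → ℝ≥0)} (h : S ⊆ MaxSpan T) :
    MaxSpan S ⊆ MaxSpan T :=
  maxSpan_subset_cone (maxSpan_maxCone T) h

private lemma scaled_ne_zero {x : Fin n → ℝ≥0} (hx : Scaled x) : x ≠ 0 := by
  rintro rfl
  have h1 : (⨆ i : Fin n, ((0 : Fin n → ℝ≥0)) i) = 1 := hx
  rcases isEmpty_or_nonempty (Fin n) with h | h
  · rw [ciSup_of_empty] at h1
    exact one_ne_zero h1.symm
  · rw [show (fun i : Fin n => ((0 : Fin n → ℝ≥0)) i) = fun _ => (0 : ℝ≥0) from rfl,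
      ciSup_const] at h1
    exact one_ne_zero h1.symm

private lemma extremal_of_finsetSup {K : Set (Fin n → ℝ≥0)} (hK : MaxCone K)
    {x : Fin n → ℝ≥0} (hx : IsExtremal K x) (hx0 : x ≠ 0)
    (F : Finset (Fin n → ℝ≥0)) (f : (Fin n → ℝ≥0) → Fin n → ℝ≥0)
    (hf : ∀ y ∈ F, f y ∈ K) (hsup : x = F.sup f) : ∃ y ∈ F, x = f y := by
  induction F using Finset.induction_on with
  | empty =>
      exfalso; apply hx0
      rw [hsup, Finset.sup_empty, pi_bot_eq_zero]
  | @insert a F ha ih =>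
      rw [Finset.sup_insert] at hsup
      have hFK : F.sup f ∈ K := finsetSup_mem_cone hK F f
        (fun y hy => hf y (Finset.mem_insert_of_mem hy))
      rcases hx.2 _ (hf a (Finset.mem_insert_self a F)) _ hFK hsup with h | h
      · exact ⟨a, Finset.mem_insert_self a F, h⟩
      · obtain ⟨y, hy, hxy⟩ := ih (fun y hy => hf y (Finset.mem_insert_of_mem hy)) h
        exact ⟨y, Finset.mem_insert_of_mem hy, hxy⟩

private lemma decompose_rep {S : Set (Fin n → ℝ≥0)} {u v : Fin n → ℝ≥0}
    (hv : v ∈ MaxSpan S) (hvu : v ≤ u) (hne : v ≠ u) :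
    ∃ v' ∈ MaxSpan (S \ {u}), ∃ a : ℝ≥0, a < 1 ∧ v = v' ⊔ a • u := by
  classical
  obtain ⟨F, lam, hF, rfl⟩ := hv
  set a : ℝ≥0 := if u ∈ F then lam u else 0 with ha
  set v' : Fin n → ℝ≥0 := (F.erase u).sup (fun x => lam x • x) with hv'
  have hv'mem : v' ∈ MaxSpan (S \ {u}) := by
    refine ⟨F.erase u, lam, ?_, rfl⟩
    intro z hz
    have hz' := Finset.mem_coe.mp hz
    exact ⟨hF (Finset.mem_of_mem_erase hz'), Finset.ne_of_mem_erase hz'⟩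
  have hdecomp : F.sup (fun x => lam x • x) = v' ⊔ a • u := by
    by_cases hu : u ∈ F
    · rw [ha, if_pos hu, hv', ← Finset.insert_erase hu, Finset.sup_insert,
        Finset.erase_insert (Finset.notMem_erase u F), sup_comm]
    · rw [ha, if_neg hu, hv', Finset.erase_eq_of_notMem hu, zero_smul]
      have h0 : (0 : Fin n → ℝ≥0) ≤ F.sup (fun x => lam x • x) := fun j => zero_le
      exact (sup_eq_left.mpr h0).symm
  refine ⟨v', hv'mem, a, ?_, hdecomp⟩
  by_contra hge
  push_neg at hge
  have hu : u ∈ F := by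
    by_contra hu
    rw [ha, if_neg hu] at hge
    exact absurd hge (by simp)
  apply hne
  apply le_antisymm hvu
  calc u ≤ a • u := by
        intro j
        simp only [Pi.smul_apply, smul_eq_mul]
        exact le_mul_of_one_le_left zero_le hge
    _ ≤ F.sup (fun x => lam x • x) := by
        rw [ha, if_pos hu]; exact Finset.le_sup (f := fun x => lam x • x) hu

end AuxStmt7

/-- if `S` is a set of scaled generators for the max cone `K` and
`E` is the set of scaled extremals of `K`, then `E ⊆ S` and each
`u ∈ F = S \ E` is redundant: `S \ {u}` still generates `K`. -/
theorem stmt7 {n : ℕ} (K S : Set (Fin n → ℝ≥0)) (hK : MaxCone K)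
    (hgen : MaxSpan S = K) (hSsc : ∀ x ∈ S, Scaled x) :
    {x | IsExtremal K x ∧ Scaled x} ⊆ S ∧
    ∀ u ∈ S \ {x | IsExtremal K x ∧ Scaled x}, MaxSpan (S \ {u}) = K := by
  have hSK : S ⊆ K := fun x hx => hgen ▸ maxSpan_mem_self hx
  constructor
  · rintro x ⟨hxe, hxs⟩
    have hx0 : x ≠ 0 := scaled_ne_zero hxs
    have hxK : x ∈ MaxSpan S := hgen ▸ hxe.1
    obtain ⟨F, lam, hF, hsup⟩ := hxK
    obtain ⟨y, hyF, hxy⟩ := extremal_of_finsetSup hK hxe hx0 F _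
      (fun y hy => hK.2.2 (lam y) y (hSK (hF hy))) hsup
    have hyS : y ∈ S := hF hyF
    have hy1 : lam y = 1 := by
      have h1 : (⨆ i, (lam y • y) i) = lam y := by
        simp only [Pi.smul_apply, smul_eq_mul]
        rw [← NNReal.mul_iSup y (lam y), hSsc y hyS, mul_one]
      have h2 := hxs
      rw [Scaled, hxy, h1] at h2
      exact h2
    rw [hxy, hy1, one_smul]
    exact hyS
  · rintro u ⟨huS, hune⟩
    have huK : u ∈ K := hSK huS
    have hnotext : ¬ IsExtremal K u := fun h => hune ⟨h, hSsc u huS⟩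
    rw [IsExtremal, not_and] at hnotext
    push_neg at hnotext
    obtain ⟨v, hvK, w, hwK, huvw, hunev, hunew⟩ := hnotext huK
    have hvle : v ≤ u := huvw ▸ le_sup_left
    have hwle : w ≤ u := huvw ▸ le_sup_right
    obtain ⟨v', hv'mem, a, ha1, hva⟩ :=
      decompose_rep (S := S) (hgen ▸ hvK) hvle (fun h => hunev h.symm)
    obtain ⟨w', hw'mem, b, hb1, hwb⟩ :=
      decompose_rep (S := S) (hgen ▸ hwK) hwle (fun h => hunew h.symm)
    have hv'le : v' ≤ u := le_trans le_sup_left (hva ▸ hvle)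
    have hw'le : w' ≤ u := le_trans le_sup_left (hwb ▸ hwle)
    have humem : u ∈ MaxSpan (S \ {u}) := by
      have huvw' : u = v' ⊔ w' := by
        funext j
        apply le_antisymm
        · have heq : u j = (v' j ⊔ a * u j) ⊔ (w' j ⊔ b * u j) := by
            have hj := congrFun huvw j
            simpa [Pi.sup_apply, Pi.smul_apply, smul_eq_mul, hva, hwb] using hj
          have hle : u j ≤ (v' j ⊔ w' j) ⊔ ((a ⊔ b) * u j) := by
            refine heq.le.trans (sup_le (sup_le ?_ ?_) (sup_le ?_ ?_))
            · exact le_sup_of_le_left le_sup_left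
            · exact le_sup_of_le_right (mul_le_mul_left le_sup_left _)
            · exact le_sup_of_le_left le_sup_right
            · exact le_sup_of_le_right (mul_le_mul_left le_sup_right _)
          rcases le_sup_iff.mp hle with h | h
          · exact h
          · rcases eq_or_lt_of_le (zero_le : (0:ℝ≥0) ≤ u j) with h0 | h0
            · rw [← h0]; exact zero_le
            · exfalso
              have hlt : (a ⊔ b) * u j < 1 * u j :=
                mul_lt_mul_of_pos_right (sup_lt_iff.mpr ⟨ha1, hb1⟩) h0
              rw [one_mul] at hlt
              exact absurd (lt_of_le_of_lt h hlt) (lt_irrefl _)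
        · exact sup_le (hv'le j) (hw'le j)
      have hmem := (maxSpan_maxCone (S \ {u})).2.1 _ hv'mem _ hw'mem
      rwa [← huvw'] at hmem
    have hsub : S ⊆ MaxSpan (S \ {u}) := by
      intro x hx
      by_cases hxu : x = u
      · exact hxu ▸ humem
      · exact maxSpan_mem_self ⟨hx, hxu⟩
    apply le_antisymm
    · exact hgen ▸ maxSpan_mono Set.diff_subset
    · rw [← hgen]
      exact maxSpan_le_maxSpan hsub
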